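/- Let F : D(F) ⊆ X → Y be Fréchet differentiable on a ball B_ρ(x†) ⊆ D(F) with F'(x) = R(x, x̄) F'(x̄) and ‖I - R(x, x̄)‖ ≤ K_0 ‖x - x̄‖ for all x, x̄ ∈ B_ρ(x†). Then for all x ∈ B_ρ(x†): ‖F(x) - F(x†) - F'(x†)(x - x†)‖ ≤ (K_0/2) ‖x - x†‖ · ‖F'(x†)(x - x†)‖. -/

import Mathlib

theorem stmt_17 (X Y : Type*)
    [NormedAddCommGroup X] [InnerProductSpace ℝ X] [CompleteSpace X]
    [NormedAddCommGroup Y] [InnerProductSpace ℝ Y] [CompleteSpace Y]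
    (F : X → Y) (F' : X → X →L[ℝ] Y) (R : X → X → Y →L[ℝ] Y)
    (xdag : X) (ρ K0 : ℝ) (hρ : 0 < ρ) (hK0 : 0 ≤ K0)
    (hdiff : ∀ x ∈ Metric.ball xdag ρ, HasFDerivAt F (F' x) x)
    (hR : ∀ x ∈ Metric.ball xdag ρ, ∀ x' ∈ Metric.ball xdag ρ,
      F' x = (R x x').comp (F' x') ∧
        ‖ContinuousLinearMap.id ℝ Y - R x x'‖ ≤ K0 * ‖x - x'‖) :
    ∀ x ∈ Metric.ball xdag ρ,
      ‖F x - F xdag - F' xdag (x - xdag)‖ ≤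
        K0 / 2 * ‖x - xdag‖ * ‖F' xdag (x - xdag)‖ := by
  intro x hx
  set v := x - xdag with hv
  set w := F' xdag v with hw
  set C : ℝ := K0 * ‖v‖ * ‖w‖ with hC
  have hCnn : 0 ≤ C := by positivity
  -- the path
  set γ : ℝ → X := fun t => xdag + t • v with hγ
  have hmem : ∀ t ∈ Set.Icc (0:ℝ) 1, γ t ∈ Metric.ball xdag ρ := by
    intro t ht
    have hxd : ‖v‖ < ρ := by
      simpa [hv, Metric.mem_ball, dist_eq_norm] using hx
    have : ‖t • v‖ ≤ ‖v‖ := by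
      rw [norm_smul, Real.norm_eq_abs, abs_of_nonneg ht.1]
      nlinarith [norm_nonneg v, ht.2]
    simpa [hγ, Metric.mem_ball, dist_eq_norm] using lt_of_le_of_lt this hxd
  -- f
  set f : ℝ → Y := fun t => F (γ t) - F xdag - t • w with hf
  set f' : ℝ → Y := fun t => R (γ t) xdag w - w with hf'
  have hderiv : ∀ t ∈ Set.Icc (0:ℝ) 1, HasDerivAt f (f' t) t := by
    intro t ht
    have hγd : HasDerivAt γ v t := by
      exact (((hasDerivAt_id t).smul_const v).const_add xdag).congr_deriv (by simp)
    have hFd : HasDerivAt (fun s => F (γ s)) (F' (γ t) v) t :=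
      (hdiff _ (hmem t ht)).comp_hasDerivAt t hγd
    have heq : F' (γ t) v = R (γ t) xdag w := by
      rw [(hR _ (hmem t ht) xdag (Metric.mem_ball_self hρ)).1]; rfl
    have : HasDerivAt f (F' (γ t) v - w) t := by
      exact ((hFd.sub_const (F xdag)).sub ((hasDerivAt_id t).smul_const w)).congr_deriv (by simp)
    rwa [heq] at this
  have hbound : ∀ t ∈ Set.Icc (0:ℝ) 1, ‖f' t‖ ≤ C * t := by
    intro t ht
    have h1 := (hR _ (hmem t ht) xdag (Metric.mem_ball_self hρ)).2
    have h2 : ‖f' t‖ ≤ ‖ContinuousLinearMap.id ℝ Y - R (γ t) xdag‖ * ‖w‖ := by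
      have := (ContinuousLinearMap.id ℝ Y - R (γ t) xdag).le_opNorm w
      simpa [hf', norm_sub_rev] using this
    have h3 : ‖γ t - xdag‖ = t * ‖v‖ := by
      simp [hγ, norm_smul, abs_of_nonneg ht.1]
    calc ‖f' t‖ ≤ (K0 * ‖γ t - xdag‖) * ‖w‖ :=
          h2.trans (by gcongr)
      _ = C * t := by rw [h3, hC]; ring
  -- fencing
  have key := image_norm_le_of_norm_deriv_right_le_deriv_boundary
    (f := f) (a := 0) (b := 1) (f' := f') (B := fun t => C * t ^ 2 / 2)
    (B' := fun t => C * t)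
    (fun t ht => (hderiv t ht).continuousAt.continuousWithinAt)
    (fun t ht => (hderiv t (Set.mem_Icc_of_Ico ht)).hasDerivWithinAt)
    (by simp [hf, hγ])
    (fun t => by
      have : HasDerivAt (fun t : ℝ => C * t ^ 2 / 2) (C * (2 * t) / 2) t := by
        exact (((hasDerivAt_pow 2 t).const_mul C).div_const 2).congr_deriv (by ring)
      simpa using this.congr_deriv (by ring))
    (fun t ht => hbound t (Set.mem_Icc_of_Ico ht))
  have h1 := key (Set.right_mem_Icc.2 zero_le_one)
  have : f 1 = F x - F xdag - w := by simp [hf, hγ, hv]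
  rw [this] at h1
  calc ‖F x - F xdag - F' xdag (x - xdag)‖ ≤ C * 1 ^ 2 / 2 := h1
    _ = K0 / 2 * ‖x - xdag‖ * ‖F' xdag (x - xdag)‖ := by rw [hC]; ring
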